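/- arXiv:1812.00826 — 4 statements merged into one kernel-verified Lean document; each statement's English description precedes it below -/
import Mathlib

section
/- Let V be an n-dimensional real inner product space with orientation o (n ≥ 1), and let ω be the volume form of o. Define cross : V^{n-1} → V by letting cross(v₁,…,v_{n-1}) be the unique vector w ∈ V such that ⟨w, u⟩ = ω(v₁,…,v_{n-1}, u) for all u ∈ V. Then cross is an (n-1)-fold vector cross product on V, i.e., it is multilinear and satisfies ⟨cross(v₁,…,v_{n-1}), vᵢ⟩ = 0 for all 1 ≤ i ≤ n-1, and ⟨cross(v₁,…,v_{n-1}), cross(v₁,…,v_{n-1})⟩ = det(⟨vᵢ,vⱼ⟩)_{i,j=1}^{n-1}. -/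
open scoped RealInnerProductSpace
open Matrix

lemma gram_sq_aux {V : Type*} [NormedAddCommGroup V] [InnerProductSpace ℝ V]
    {m : ℕ} [Fact (Module.finrank ℝ V = m + 1)]
    (o : Orientation ℝ V (Fin (m + 1))) (w : Fin (m + 1) → V) :
    o.volumeForm w * o.volumeForm w
      = Matrix.det (Matrix.of fun i j => ⟪w i, w j⟫) := by
  set b := o.finOrthonormalBasis (Nat.succ_pos m) Fact.out with hb
  rw [o.volumeForm_robust b (o.finOrthonormalBasis_orientation _ _), Module.Basis.det_apply]
  have h : (Matrix.of fun i j => (⟪w i, w j⟫ : ℝ))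
      = (b.toBasis.toMatrix w)ᵀ * (b.toBasis.toMatrix w) := by
    ext i j
    simp only [Matrix.mul_apply, Matrix.transpose_apply, Module.Basis.toMatrix_apply,
      Matrix.of_apply, OrthonormalBasis.coe_toBasis_repr_apply, b.repr_apply_apply,
      RCLike.inner_apply, starRingEnd_apply, star_trivial]
    rw [← b.sum_inner_mul_inner (w i) (w j)]
    congr 1; ext k; rw [real_inner_comm (b k) (w i)]
  rw [h, Matrix.det_mul, Matrix.det_transpose]

/-- On an oriented real inner product space `V` of dimension `n = m + 1 ≥ 1` with volume
form `ω`, the map `cross` defined by `⟪cross v, u⟫ = ω (v₁, …, v_{n-1}, u)` is an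
`(n-1)`-fold vector cross product: it is multilinear, orthogonal to each of its
arguments, and its squared norm is the Gram determinant of its arguments. -/
theorem cross_of_volumeForm_is_vector_cross_product
    {V : Type*} [NormedAddCommGroup V] [InnerProductSpace ℝ V]
    {m : ℕ} [Fact (Module.finrank ℝ V = m + 1)]
    (o : Orientation ℝ V (Fin (m + 1)))
    (cross : (Fin m → V) → V)
    (hcross : ∀ (v : Fin m → V) (u : V),
      ⟪cross v, u⟫ = o.volumeForm (Fin.snoc v u)) :
    (∀ (v : Fin m → V) (i : Fin m) (x y : V),
        cross (Function.update v i (x + y))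
          = cross (Function.update v i x) + cross (Function.update v i y)) ∧
    (∀ (v : Fin m → V) (i : Fin m) (c : ℝ) (x : V),
        cross (Function.update v i (c • x)) = c • cross (Function.update v i x)) ∧
    (∀ (v : Fin m → V) (i : Fin m), ⟪cross v, v i⟫ = 0) ∧
    (∀ v : Fin m → V,
        ⟪cross v, cross v⟫ = Matrix.det (Matrix.of fun i j : Fin m => ⟪v i, v j⟫)) := by
  have horth : ∀ (v : Fin m → V) (i : Fin m), ⟪cross v, v i⟫ = 0 := by
    intro v i
    rw [hcross]
    apply (o.volumeForm).map_eq_zero_of_eq _ (i := i.castSucc) (j := Fin.last m)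
    · rw [Fin.snoc_castSucc, Fin.snoc_last]
    · exact (Fin.castSucc_lt_last i).ne
  refine ⟨?_, ?_, horth, ?_⟩
  · intro v i x y
    apply ext_inner_right ℝ
    intro u
    rw [inner_add_left, hcross, hcross, hcross, Fin.snoc_update, Fin.snoc_update,
      Fin.snoc_update, (o.volumeForm).map_update_add]
  · intro v i c x
    apply ext_inner_right ℝ
    intro u
    rw [real_inner_smul_left, hcross, hcross, Fin.snoc_update, Fin.snoc_update,
      (o.volumeForm).map_update_smul, smul_eq_mul]
  · intro v
    set x : ℝ := ⟪cross v, cross v⟫ with hx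
    set G : Matrix (Fin m) (Fin m) ℝ := Matrix.of fun i j => ⟪v i, v j⟫ with hG
    set w : Fin (m + 1) → V := Fin.snoc v (cross v) with hw
    have key : x * x = x * G.det := by
      have h1 : x = o.volumeForm w := hcross v (cross v)
      have h2 := gram_sq_aux o w
      rw [← h1] at h2
      rw [h2]
      -- expand det along last row
      rw [Matrix.det_succ_row _ (Fin.last m)]
      rw [Fin.sum_univ_castSucc]
      have hz : ∀ j : Fin m,
          (Matrix.of fun a b => (⟪w a, w b⟫ : ℝ))
            (Fin.last m) j.castSucc = 0 := by
        intro j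
        simp only [Matrix.of_apply, hw, Fin.snoc_last, Fin.snoc_castSucc]
        exact horth v j
      rw [Finset.sum_eq_zero (fun j _ => by rw [hz j]; ring)]
      simp only [Matrix.of_apply, hw, Fin.snoc_last, zero_add]
      rw [← hx]
      have hsub : ((Matrix.of fun a b =>
          (⟪w a, w b⟫ : ℝ)).submatrix
            (Fin.last m).succAbove (Fin.last m).succAbove) = G := by
        ext i j
        simp [Fin.succAbove_last, hG, hw]
      rw [hsub]
      ring_nf
      rw [Fin.val_last]
      rw [mul_comm m 2, pow_mul, neg_one_sq, one_pow, mul_one]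
    rcases eq_or_ne x 0 with h0 | h0
    · rw [h0]
      show (0:ℝ) = G.det
      by_contra hGd0
      have hGd : G.det ≠ 0 := fun h => hGd0 h.symm
      -- v is linearly independent
      have hli : LinearIndependent ℝ v := by
        rw [Fintype.linearIndependent_iff]
        intro g hg j
        have hmul : G.mulVec g = 0 := by
          ext i
          simp only [Matrix.mulVec, dotProduct, hG, Matrix.of_apply, Pi.zero_apply]
          calc ∑ k, ⟪v i, v k⟫ * g k = ⟪v i, ∑ k, g k • v k⟫ := by
                rw [inner_sum]; congr 1; ext k; rw [real_inner_smul_right]; ring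
            _ = 0 := by rw [hg, inner_zero_right]
        have := Matrix.eq_zero_of_mulVec_eq_zero (fun h => hGd (h ▸ rfl)) hmul
        exact congrFun this j
      obtain ⟨u, hu⟩ := exists_linearIndependent_snoc_of_lt_finrank hli
        (by rw [Fact.out (p := Module.finrank ℝ V = m + 1)]; omega)
      have hcv : cross v = 0 := inner_self_eq_zero.mp (hx.symm.trans h0)
      have hzero : o.volumeForm (Fin.snoc v u) = 0 := by
        rw [← hcross, hcv, inner_zero_left]
      set B := basisOfLinearIndependentOfCardEqFinrank hu
        (by simp [Fact.out (p := Module.finrank ℝ V = m + 1)])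
      set b := o.finOrthonormalBasis (Nat.succ_pos m) Fact.out with hb
      have := o.volumeForm_robust b (o.finOrthonormalBasis_orientation _ _)
      rw [this] at hzero
      have : b.toBasis.det ⇑B ≠ 0 := (b.toBasis.isUnit_det B).ne_zero
      rw [coe_basisOfLinearIndependentOfCardEqFinrank] at this
      exact this hzero
    · have := key
      field_simp at this
      linarith
end

section
/- Let V be an n-dimensional oriented real inner product space. If X₁ and X₂ are both positively oriented (n-1)-fold vector cross products on V, then X₁ = X₂, i.e., X₁(v₁,…,v_{n-1}) = X₂(v₁,…,v_{n-1}) for all v₁,…,v_{n-1} ∈ V. -/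
open scoped RealInnerProductSpace

/-- If a vector is orthogonal to each member of a family, it lies in the orthogonal
complement of the span of the family. -/
lemma mem_orthogonal_span_of_inner_eq_zero
    {V : Type*} [NormedAddCommGroup V] [InnerProductSpace ℝ V]
    {ι : Type*} (v : ι → V) (x : V) (h : ∀ i, ⟪x, v i⟫ = 0) :
    x ∈ (Submodule.span ℝ (Set.range v))ᗮ := by
  rw [Submodule.mem_orthogonal']
  intro u hu
  induction hu using Submodule.span_induction with
  | mem u hu => obtain ⟨i, rfl⟩ := hu; exact h i
  | zero => simp
  | add a b _ _ ha hb => rw [inner_add_right, ha, hb, add_zero]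
  | smul c a _ ha => rw [inner_smul_right, ha, mul_zero]

/-- If the family is linearly dependent, its Gram determinant vanishes. -/
lemma gram_det_eq_zero_of_not_linearIndependent
    {V : Type*} [NormedAddCommGroup V] [InnerProductSpace ℝ V]
    {m : ℕ} {v : Fin m → V} (hv : ¬ LinearIndependent ℝ v) :
    Matrix.det (Matrix.of fun i j : Fin m => ⟪v i, v j⟫) = 0 := by
  obtain ⟨c, hsum, i₀, hi₀⟩ := Fintype.not_linearIndependent_iff.mp hv
  apply Matrix.exists_mulVec_eq_zero_iff.mp
  refine ⟨c, fun h => hi₀ (congrFun h i₀), ?_⟩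
  funext i
  have : (∑ j, c j • v j) = 0 := hsum
  calc (Matrix.of fun i j : Fin m => ⟪v i, v j⟫).mulVec c i
      = ∑ j, ⟪v i, v j⟫ * c j := rfl
    _ = ⟪v i, ∑ j, c j • v j⟫ := by
        rw [inner_sum]; congr 1; funext j; rw [real_inner_smul_right]; ring
    _ = 0 := by rw [this, inner_zero_right]
  

/-- Uniqueness of the positively oriented `(n-1)`-fold vector cross product on an
oriented real inner product space of dimension `n = m + 1`.  A vector cross product is a
multilinear map orthogonal to each of its arguments whose squared norm is the Gram
determinant of its arguments; it is positively oriented if appending its value to any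
linearly independent tuple of arguments yields a positively oriented basis (equivalently,
the volume form is positive on the resulting tuple). -/
theorem positively_oriented_vcp_unique
    {V : Type*} [NormedAddCommGroup V] [InnerProductSpace ℝ V]
    {m : ℕ} [Fact (Module.finrank ℝ V = m + 1)]
    (o : Orientation ℝ V (Fin (m + 1)))
    (X₁ X₂ : MultilinearMap ℝ (fun _ : Fin m => V) V)
    (horth₁ : ∀ (v : Fin m → V) (i : Fin m), ⟪X₁ v, v i⟫ = 0)
    (hnorm₁ : ∀ v : Fin m → V,
      ⟪X₁ v, X₁ v⟫ = Matrix.det (Matrix.of fun i j : Fin m => ⟪v i, v j⟫))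
    (hpos₁ : ∀ v : Fin m → V, LinearIndependent ℝ v →
      0 < o.volumeForm (Fin.snoc v (X₁ v)))
    (horth₂ : ∀ (v : Fin m → V) (i : Fin m), ⟪X₂ v, v i⟫ = 0)
    (hnorm₂ : ∀ v : Fin m → V,
      ⟪X₂ v, X₂ v⟫ = Matrix.det (Matrix.of fun i j : Fin m => ⟪v i, v j⟫))
    (hpos₂ : ∀ v : Fin m → V, LinearIndependent ℝ v →
      0 < o.volumeForm (Fin.snoc v (X₂ v))) :
    ∀ v : Fin m → V, X₁ v = X₂ v := by
  have hdim : Module.finrank ℝ V = m + 1 := Fact.out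
  have : FiniteDimensional ℝ V := FiniteDimensional.of_finrank_eq_succ hdim
  intro v
  by_cases hv : LinearIndependent ℝ v
  · -- linearly independent case
    -- X₁ v ≠ 0
    have h1ne : X₁ v ≠ 0 := by
      intro h
      have := hpos₁ v hv
      rw [o.volumeForm.map_coord_zero (Fin.last m) (by simp [h])] at this
      exact lt_irrefl 0 this
    -- both values lie in the 1-dimensional orthogonal complement
    set K : Submodule ℝ V := (Submodule.span ℝ (Set.range v))ᗮ with hK
    have hm1 : X₁ v ∈ K := mem_orthogonal_span_of_inner_eq_zero v _ (horth₁ v)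
    have hm2 : X₂ v ∈ K := mem_orthogonal_span_of_inner_eq_zero v _ (horth₂ v)
    have hfin : Module.finrank ℝ K = 1 := by
      have h1 : Module.finrank ℝ (Submodule.span ℝ (Set.range v)) = m := by
        rw [finrank_span_eq_card hv, Fintype.card_fin]
      have h2 := Submodule.finrank_add_finrank_orthogonal
        (K := Submodule.span ℝ (Set.range v))
      rw [h1, hdim] at h2
      rw [hK]
      omega
    obtain ⟨c, hc⟩ : ∃ c : ℝ, c • X₁ v = X₂ v := by
      have h1 : (⟨X₁ v, hm1⟩ : K) ≠ 0 := by
        intro h; exact h1ne (congrArg Subtype.val h)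
      obtain ⟨c, hc⟩ := (finrank_eq_one_iff_of_nonzero' (⟨X₁ v, hm1⟩ : K) h1).mp hfin
        ⟨X₂ v, hm2⟩
      exact ⟨c, congrArg Subtype.val hc⟩
    -- norms agree, so c = ±1
    have hinner : ⟪X₁ v, X₁ v⟫ = ⟪X₂ v, X₂ v⟫ := by rw [hnorm₁, hnorm₂]
    have hpos : (0:ℝ) < ⟪X₁ v, X₁ v⟫ :=
      lt_of_le_of_ne real_inner_self_nonneg
        (fun h => h1ne (inner_self_eq_zero.mp h.symm))
    have hc2 : c ^ 2 = 1 := by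
      have : ⟪X₂ v, X₂ v⟫ = c ^ 2 * ⟪X₁ v, X₁ v⟫ := by
        rw [← hc, real_inner_smul_left, real_inner_smul_right]; ring
      rw [this] at hinner
      nlinarith
    have hcval : c = 1 ∨ c = -1 := by
      have hfac : (c - 1) * (c + 1) = 0 := by nlinarith
      rcases mul_eq_zero.mp hfac with h | h
      · exact Or.inl (by linarith)
      · exact Or.inr (by linarith)
    rcases hcval with rfl | rfl
    · rw [← hc, one_smul]
    · exfalso
      have hvol : o.volumeForm (Fin.snoc v (X₂ v)) =
          -o.volumeForm (Fin.snoc v (X₁ v)) := by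
        have hms := o.volumeForm.map_update_smul (Fin.snoc v (X₁ v)) (Fin.last m)
          (-1 : ℝ) (X₁ v)
        rw [Fin.update_snoc_last, Fin.update_snoc_last] at hms
        rw [← hc]
        simpa using hms
      have h1 := hpos₁ v hv
      have h2 := hpos₂ v hv
      rw [hvol] at h2
      linarith
  · -- linearly dependent case: both values are zero
    have hdet := gram_det_eq_zero_of_not_linearIndependent hv
    have h1 : X₁ v = 0 := by
      have := hnorm₁ v; rw [hdet] at this
      exact inner_self_eq_zero.mp this
    have h2 : X₂ v = 0 := by
      have := hnorm₂ v; rw [hdet] at this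
      exact inner_self_eq_zero.mp this
    rw [h1, h2]
end

section
/- Let V be an m-dimensional oriented real inner product space (m ≥ 2) with positively oriented orthonormal basis (E₁,…,E_m), and let cross denote the positively oriented (m-1)-fold vector cross product on V. Let Z ∈ V satisfy ⟨Z, E₁⟩ ≠ 0, and for 1 ≤ j ≤ m-1 set Xⱼ(Z) = cross(Z, E₂, …, E_{m-j}, E_{m-j+2}, …, E_m) (the arguments after Z being E₂,…,E_m with E_{m-j+1} omitted). Then the m vectors E₁, X₁(Z), …, X_{m-1}(Z) are linearly independent. -/
open scoped RealInnerProductSpace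
set_option maxHeartbeats 1000000

/-- The cycle `(p, p+1, …, n)` on `Fin (n+1)`, as a function. -/
def auxCycleFun (n p : ℕ) (s : Fin (n + 1)) : Fin (n + 1) :=
  ⟨if (s : ℕ) < p then s else if (s : ℕ) = n then p else (s : ℕ) + 1,
    by have := s.isLt; split_ifs <;> omega⟩

def auxCycleInv (n p : ℕ) (s : Fin (n + 1)) : Fin (n + 1) :=
  ⟨if (s : ℕ) < p then s else if (s : ℕ) = p then n else (s : ℕ) - 1,
    by have := s.isLt; split_ifs <;> omega⟩

/-- The cycle `(p, p+1, …, n)` on `Fin (n+1)` sending `n ↦ p` and `s ↦ s+1` for `p ≤ s < n`. -/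
def auxCyclePerm (n p : ℕ) (hpn : p ≤ n) : Equiv.Perm (Fin (n + 1)) where
  toFun := auxCycleFun n p
  invFun := auxCycleInv n p
  left_inv s := by
    have := s.isLt
    ext
    simp only [auxCycleFun, auxCycleInv]
    split_ifs <;> omega
  right_inv s := by
    have := s.isLt
    ext
    simp only [auxCycleFun, auxCycleInv]
    split_ifs <;> omega

lemma auxCyclePerm_apply (n p : ℕ) (hpn : p ≤ n) (s : Fin (n + 1)) :
    (auxCyclePerm n p hpn s : ℕ) =
      if (s : ℕ) < p then (s : ℕ) else if (s : ℕ) = n then p else (s : ℕ) + 1 :=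
  rfl

/-- Let `(E₁, …, E_m)` be a positively oriented orthonormal basis of an `m`-dimensional
oriented real inner product space (`m ≥ 2`; the dimension is written `m - 1 + 1`),
`cross` the positively oriented `(m-1)`-fold vector cross product, and `Z ∈ V` with
`⟪Z, E₁⟫ ≠ 0`.  For `1 ≤ j ≤ m - 1` let
`Xⱼ = cross (Z, E₂, …, Ẽ_{m-j+1}, …, E_m)` (with `E_{m-j+1}` omitted).  Then the `m`
vectors `E₁, X₁, …, X_{m-1}` are linearly independent.  (Indices are 0-based as in the
argument tuple: slot `i ≥ 1` holds `E ⟨i⟩` if `i < m - j` and `E ⟨i+1⟩` otherwise.) -/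
theorem E₁_with_cross_fields_linearIndependent
    {V : Type*} [NormedAddCommGroup V] [InnerProductSpace ℝ V]
    {m : ℕ} (hm : 2 ≤ m) [Fact (Module.finrank ℝ V = m - 1 + 1)]
    (o : Orientation ℝ V (Fin (m - 1 + 1)))
    (E : OrthonormalBasis (Fin (m - 1 + 1)) ℝ V)
    (hE : E.toBasis.orientation = o)
    (cross : (Fin (m - 1) → V) → V)
    (hcross : ∀ (v : Fin (m - 1) → V) (u : V),
      ⟪cross v, u⟫ = o.volumeForm (Fin.snoc v u))
    (Z : V) (hZ : ⟪Z, E ⟨0, by omega⟩⟫ ≠ 0)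
    (X : ℕ → V)
    (hX : ∀ j, 1 ≤ j → j ≤ m - 1 →
      X j = cross (fun i : Fin (m - 1) =>
        if h : (i : ℕ) = 0 then Z
        else E ⟨if (i : ℕ) < m - j then (i : ℕ) else (i : ℕ) + 1,
          by split <;> omega⟩)) :
    LinearIndependent ℝ (fun k : Fin (m - 1 + 1) =>
      if (k : ℕ) = 0 then E ⟨0, by omega⟩ else X (k : ℕ)) := by
  have hE0 : E ⟨0, by omega⟩ = E 0 := congrArg E (by ext; simp)
  have hZ0 : ⟪Z, E 0⟫ ≠ 0 := by rw [← hE0]; exact hZ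
  -- Key fact 0 : `X j` is orthogonal to `E i` for `i ∉ {0, m - j}`.
  have key0 : ∀ j, 1 ≤ j → j ≤ m - 1 → ∀ i : Fin (m - 1 + 1),
      (i : ℕ) ≠ 0 → (i : ℕ) ≠ m - j → ⟪X j, E i⟫ = 0 := by
    intro j h1 h2 i hi0 hip
    have him : (i : ℕ) < m - 1 + 1 := i.isLt
    rw [hX j h1 h2, hcross]
    rcases Ne.lt_or_gt hip with h | h
    · refine AlternatingMap.map_eq_zero_of_eq _ _
        (i := Fin.castSucc ⟨(i : ℕ), by omega⟩) (j := Fin.last _) ?_ ?_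
      · rw [Fin.snoc_castSucc, Fin.snoc_last]
        rw [dif_neg (by simpa using hi0)]
        congr 1
        ext
        simp [h]
      · simp [Fin.ext_iff]
        omega
    · refine AlternatingMap.map_eq_zero_of_eq _ _
        (i := Fin.castSucc ⟨(i : ℕ) - 1, by omega⟩) (j := Fin.last _) ?_ ?_
      · rw [Fin.snoc_castSucc, Fin.snoc_last]
        rw [dif_neg (by simp; omega)]
        congr 1
        ext
        simp only [Fin.val_mk]
        rw [if_neg (by omega)]
        omega
      · simp [Fin.ext_iff]
        omega
  -- Key fact 1 : `⟪X j, E (m - j)⟫ ≠ 0`.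
  have key1 : ∀ j, 1 ≤ j → j ≤ m - 1 → ∀ hq : m - j < m - 1 + 1,
      ⟪X j, E ⟨m - j, hq⟩⟫ ≠ 0 := by
    intro j h1 h2 hq
    have hp1 : 1 ≤ m - j := by omega
    have hpn : m - j ≤ m - 1 := by omega
    set σ : Equiv.Perm (Fin (m - 1 + 1)) := auxCyclePerm (m - 1) (m - j) hpn with hσ
    rw [hX j h1 h2, hcross]
    have hfun : (Fin.snoc (fun i : Fin (m - 1) =>
        if h : (i : ℕ) = 0 then Z
        else E ⟨if (i : ℕ) < m - j then (i : ℕ) else (i : ℕ) + 1,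
          by split <;> omega⟩) (E ⟨m - j, by omega⟩) : Fin (m - 1 + 1) → V)
        = Function.update (fun s => E (σ s)) 0 Z := by
      funext s
      by_cases hs0 : s = 0
      · subst hs0
        rw [Function.update_self,
          show (0 : Fin (m - 1 + 1)) = Fin.castSucc (⟨0, by omega⟩ : Fin (m - 1)) from
            Fin.ext (by simp)]
        rw [Fin.snoc_castSucc]
        simp
      · rw [Function.update_of_ne hs0]
        have hs0' : (s : ℕ) ≠ 0 := fun hc => hs0 (Fin.ext hc)
        by_cases hsl : (s : ℕ) = m - 1
        · have : s = Fin.last (m - 1) := Fin.ext hsl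
          subst this
          rw [Fin.snoc_last]
          congr 1
          ext
          rw [auxCyclePerm_apply]
          simp only [Fin.val_last]
          rw [if_neg (by omega)]
          simp
        · have hlt : (s : ℕ) < m - 1 := by have := s.isLt; omega
          have : s = Fin.castSucc ⟨(s : ℕ), hlt⟩ := Fin.ext rfl
          rw [this, Fin.snoc_castSucc]
          rw [dif_neg (by simpa using hs0')]
          congr 1
          ext
          rw [auxCyclePerm_apply]
          simp only [Fin.coe_castSucc, Fin.val_mk]
          by_cases hc : (s : ℕ) < m - j
          · rw [if_pos hc, if_pos hc]
          · rw [if_neg hc, if_neg hc, if_neg hsl]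
    rw [hfun]
    rw [show Z = ∑ k, ⟪E k, Z⟫ • E k from (E.sum_repr' Z).symm]
    rw [AlternatingMap.map_update_sum]
    rw [Finset.sum_eq_single (0 : Fin (m - 1 + 1))]
    · rw [AlternatingMap.map_update_smul]
      have hσ0 : σ 0 = 0 := by
        ext
        rw [auxCyclePerm_apply]
        rw [if_pos (by simp only [Fin.val_zero]; omega)]
      have : Function.update (fun s => E (σ s)) 0 (E 0)
          = fun s => E (σ s) := by
        nth_rewrite 1 [show E 0 = E (σ 0) by rw [hσ0]]
        exact Function.update_eq_self _ _
      rw [this]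
      have hperm : o.volumeForm (fun s => E (σ s))
          = Equiv.Perm.sign σ • o.volumeForm E := AlternatingMap.map_perm _ _ _
      have hvol : o.volumeForm (⇑E) = 1 := by
        rw [o.volumeForm_robust E hE, ← OrthonormalBasis.coe_toBasis, Module.Basis.det_self]
      rw [hperm, hvol]
      have hZ' : ⟪E (0 : Fin (m - 1 + 1)), Z⟫ ≠ 0 := by
        rw [real_inner_comm]
        exact hZ0
      rcases Int.units_eq_one_or (Equiv.Perm.sign σ) with hs | hs <;>
        rw [hs] <;> simpa using hZ'
    · intro k _ hk0
      rw [AlternatingMap.map_update_smul]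
      have hkval : (k : ℕ) ≠ 0 := fun hc => hk0 (Fin.ext hc)
      have hinv : σ (σ⁻¹ k) = k := σ.apply_symm_apply k
      have hne : σ⁻¹ k ≠ 0 := by
        intro hc
        rw [hc] at hinv
        apply hk0
        rw [← hinv]
        ext
        rw [auxCyclePerm_apply]
        rw [if_pos (by simp only [Fin.val_zero]; omega)]
      have heq : Function.update (fun s => E (σ s)) 0 (E k) (σ⁻¹ k)
          = Function.update (fun s => E (σ s)) 0 (E k) 0 := by
        rw [Function.update_of_ne hne, Function.update_self, hinv]
      rw [AlternatingMap.map_eq_zero_of_eq _ _ heq hne, smul_zero]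
    · intro hc
      exact absurd (Finset.mem_univ _) hc
  -- Main argument.
  rw [Fintype.linearIndependent_iff]
  intro g hg
  have hne : ∀ k : Fin (m - 1 + 1), (k : ℕ) ≠ 0 → g k = 0 := by
    intro k hk
    have hk1 : 1 ≤ (k : ℕ) := by omega
    have hk2 : (k : ℕ) ≤ m - 1 := by have := k.isLt; omega
    have hq : m - (k : ℕ) < m - 1 + 1 := by omega
    have hsum := congrArg (fun w => ⟪w, E ⟨m - (k : ℕ), hq⟩⟫) hg
    simp only [sum_inner, real_inner_smul_left, inner_zero_left] at hsum
    rw [Finset.sum_eq_single k] at hsum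
    · rw [if_neg hk] at hsum
      rcases mul_eq_zero.1 hsum with h | h
      · exact h
      · exact absurd h (key1 (k : ℕ) hk1 hk2 hq)
    · intro l _ hlk
      by_cases hl0 : (l : ℕ) = 0
      · rw [if_pos hl0]
        rw [E.orthonormal.2 (by
          intro hc
          rw [Fin.ext_iff] at hc
          simp only [Fin.val_mk] at hc
          omega), mul_zero]
      · rw [if_neg hl0]
        have hl1 : 1 ≤ (l : ℕ) := by omega
        have hl2 : (l : ℕ) ≤ m - 1 := by have := l.isLt; omega
        rw [key0 (l : ℕ) hl1 hl2 _ (by simp; omega) (by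
          simp only [Fin.val_mk]
          intro hc
          apply hlk
          ext
          omega), mul_zero]
    · intro hc
      exact absurd (Finset.mem_univ _) hc
  intro k
  by_cases hk : (k : ℕ) = 0
  · rw [show k = 0 from Fin.ext (by simpa using hk)]
    have hsum := congrArg (fun w => ⟪w, E 0⟫) hg
    simp only [sum_inner, real_inner_smul_left, inner_zero_left] at hsum
    rw [Finset.sum_eq_single (0 : Fin (m - 1 + 1))] at hsum
    · rw [if_pos (by simp), hE0] at hsum
      rw [real_inner_self_eq_norm_sq, E.orthonormal.1] at hsum
      simpa using hsum
    · intro l _ hl0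
      rw [hne l (fun hc => hl0 (Fin.ext hc)), zero_mul]
    · intro hc
      exact absurd (Finset.mem_univ _) hc
  · exact hne k hk
end

section
/- Let γ : ℝ → ℝ³ and X : ℝ → ℝ³ be differentiable, let I ⊆ ℝ be an interval and J ⊆ ℝ an interval containing 0, and define Z(t,u) = (γ′(t) + u X′(t)) × X(t), where × is the cross product in ℝ³. Assume Z(t,u) ≠ 0 for all (t,u) ∈ I × J. Then ∂/∂u of the normalized field Z/|Z| vanishes at every point of I × J if and only if γ′(t) · (X′(t) × X(t)) = 0 for every t ∈ I. -/
open scoped RealInnerProductSpace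

/-- The cross product of `ℝ³`, regarded as an operation on `EuclideanSpace ℝ (Fin 3)`. -/
noncomputable def cross3 (a b : EuclideanSpace ℝ (Fin 3)) : EuclideanSpace ℝ (Fin 3) :=
  (WithLp.equiv 2 (Fin 3 → ℝ)).symm
    (crossProduct ((WithLp.equiv 2 (Fin 3 → ℝ)) a) ((WithLp.equiv 2 (Fin 3 → ℝ)) b))

open Matrix

private lemma inner_eq_dot (x y : EuclideanSpace ℝ (Fin 3)) :
    ⟪x, y⟫ = (WithLp.equiv 2 (Fin 3 → ℝ) x) ⬝ᵥ (WithLp.equiv 2 (Fin 3 → ℝ) y) := by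
  simp [PiLp.inner_apply, dotProduct, RCLike.inner_apply, mul_comm]

private lemma raw_cross_cross (a b : Fin 3 → ℝ) :
    crossProduct a (crossProduct a b) = (a ⬝ᵥ b) • a - (a ⬝ᵥ a) • b := by
  funext i; fin_cases i <;> simp [crossProduct, dotProduct, Fin.sum_univ_three] <;> ring

private lemma raw_triple (a b c : Fin 3 → ℝ) :
    crossProduct (crossProduct a c) (crossProduct b c) = (a ⬝ᵥ crossProduct b c) • c := by
  funext i; fin_cases i <;> simp [crossProduct, dotProduct, Fin.sum_univ_three] <;> ring

private lemma equiv_cross3 (a b : EuclideanSpace ℝ (Fin 3)) :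
    WithLp.equiv 2 (Fin 3 → ℝ) (cross3 a b)
      = crossProduct (WithLp.equiv 2 (Fin 3 → ℝ) a) (WithLp.equiv 2 (Fin 3 → ℝ) b) := by
  simp [cross3]

private lemma cross3_add_left (a b c : EuclideanSpace ℝ (Fin 3)) :
    cross3 (a + b) c = cross3 a c + cross3 b c := by
  simp [cross3, map_add, LinearMap.add_apply]

private lemma cross3_smul_left (r : ℝ) (a b : EuclideanSpace ℝ (Fin 3)) :
    cross3 (r • a) b = r • cross3 a b := by
  simp [cross3, _root_.map_smul, LinearMap.smul_apply]

private lemma cross3_smul_right (r : ℝ) (a b : EuclideanSpace ℝ (Fin 3)) :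
    cross3 a (r • b) = r • cross3 a b := by
  simp [cross3, _root_.map_smul]

private lemma cross3_self (a : EuclideanSpace ℝ (Fin 3)) : cross3 a a = 0 := by
  simp [cross3, cross_self]

private lemma cross3_zero_right (a : EuclideanSpace ℝ (Fin 3)) : cross3 a 0 = 0 := by
  simp [cross3]

private lemma cross3_cross3 (z b : EuclideanSpace ℝ (Fin 3)) :
    cross3 z (cross3 z b) = ⟪z, b⟫ • z - ⟪z, z⟫ • b := by
  apply (WithLp.equiv 2 (Fin 3 → ℝ)).injective
  simp only [equiv_cross3, inner_eq_dot]
  exact raw_cross_cross _ _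

private lemma cross3_triple (a b c : EuclideanSpace ℝ (Fin 3)) :
    cross3 (cross3 a c) (cross3 b c) = ⟪a, cross3 b c⟫ • c := by
  apply (WithLp.equiv 2 (Fin 3 → ℝ)).injective
  simp only [equiv_cross3, inner_eq_dot]
  exact raw_triple _ _ _

private lemma key_deriv (A B : EuclideanSpace ℝ (Fin 3)) (u : ℝ) (h : A + u • B ≠ 0) :
    HasDerivAt (fun s : ℝ => ‖A + s • B‖⁻¹ • (A + s • B))
      ((-(⟪A + u • B, B⟫ / ‖A + u • B‖^3)) • (A + u • B) + ‖A + u • B‖⁻¹ • B) u := by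
  set Z := A + u • B with hZdef
  have hf : HasDerivAt (fun s : ℝ => A + s • B) B u := by
    simpa using ((hasDerivAt_id u).smul_const B).const_add A
  have hq : HasDerivAt (fun s : ℝ => ⟪A + s • B, A + s • B⟫) (⟪Z, B⟫ + ⟪B, Z⟫) u :=
    hf.inner ℝ hf
  have hZn : ‖Z‖ ≠ 0 := norm_ne_zero_iff.mpr h
  have hqZ : ⟪Z, Z⟫ ≠ 0 := by
    rw [real_inner_self_eq_norm_sq]; positivity
  have hnorm : HasDerivAt (fun s : ℝ => ‖A + s • B‖) (⟪Z, B⟫ / ‖Z‖) u := by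
    have := (Real.hasDerivAt_sqrt hqZ).comp u hq
    have e : (fun s : ℝ => ‖A + s • B‖) = fun s => Real.sqrt ⟪A + s • B, A + s • B⟫ := by
      funext s; rw [norm_eq_sqrt_real_inner]
    rw [e]
    refine this.congr_deriv ?_
    symm
    rw [real_inner_self_eq_norm_sq, Real.sqrt_sq (norm_nonneg Z), real_inner_comm B Z]
    generalize ⟪Z, B⟫ = c
    field_simp
    try ring
    try tauto
  have hinv : HasDerivAt (fun s : ℝ => ‖A + s • B‖⁻¹) (-(⟪Z, B⟫ / ‖Z‖^3)) u := by
    have := hnorm.inv hZn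
    refine this.congr_deriv ?_
    symm
    show -(⟪Z, B⟫ / ‖Z‖^3) = -(⟪Z, B⟫ / ‖Z‖) / ‖Z‖^2
    generalize ⟪Z, B⟫ = c
    field_simp
    try ring
    try tauto
  have := hinv.smul hf
  refine this.congr_deriv ?_
  symm
  rw [hZdef]
  generalize ⟪A + u • B, B⟫ = c
  module

/-- Let `γ, X : ℝ → ℝ³` be differentiable, `I, J ⊆ ℝ` intervals with `0 ∈ J`, and
`Z (t, u) = (γ′(t) + u X′(t)) × X(t)`, assumed nonzero on `I × J`.  Then `∂/∂u` of the
normalized field `Z/|Z|` vanishes on `I × J` if and only if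
`γ′(t) · (X′(t) × X(t)) = 0` for every `t ∈ I`. -/
theorem ruled_surface_flat_iff_classical_condition
    (γ X : ℝ → EuclideanSpace ℝ (Fin 3))
    (hγ : Differentiable ℝ γ) (hX : Differentiable ℝ X)
    (I J : Set ℝ) (hI : I.OrdConnected) (hJ : J.OrdConnected) (hJ0 : (0 : ℝ) ∈ J)
    (Z : ℝ → ℝ → EuclideanSpace ℝ (Fin 3))
    (hZ : ∀ t u : ℝ, Z t u = cross3 (deriv γ t + u • deriv X t) (X t))
    (hZne : ∀ t ∈ I, ∀ u ∈ J, Z t u ≠ 0) :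
    (∀ t ∈ I, ∀ u ∈ J, deriv (fun s : ℝ => ‖Z t s‖⁻¹ • Z t s) u = 0)
      ↔ (∀ t ∈ I, ⟪deriv γ t, cross3 (deriv X t) (X t)⟫ = 0) := by
  have key : ∀ t ∈ I, ∀ u ∈ J,
      (deriv (fun s : ℝ => ‖Z t s‖⁻¹ • Z t s) u = 0 ↔
        ⟪deriv γ t, cross3 (deriv X t) (X t)⟫ = 0) := by
    intro t ht u hu
    set A := cross3 (deriv γ t) (X t) with hA
    set B := cross3 (deriv X t) (X t) with hB
    set D := ⟪deriv γ t, cross3 (deriv X t) (X t)⟫ with hD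
    have hZtu : ∀ s : ℝ, Z t s = A + s • B := by
      intro s
      rw [hZ, cross3_add_left, cross3_smul_left]
    have hXne : X t ≠ 0 := by
      intro hx
      apply hZne t ht 0 hJ0
      rw [hZ, hx, cross3_zero_right]
    set Zu := A + u • B with hZu'
    have hZuA : Z t u = Zu := hZtu u
    have hZune : Zu ≠ 0 := hZuA ▸ hZne t ht u hu
    have hn : ‖Zu‖ ≠ 0 := norm_ne_zero_iff.mpr hZune
    have hZB : cross3 Zu B = D • X t := by
      rw [hZu', cross3_add_left, cross3_smul_left, cross3_self, smul_zero, add_zero,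
        hA, hB]
      exact cross3_triple _ _ _
    have hfun : (fun s : ℝ => ‖Z t s‖⁻¹ • Z t s)
        = fun s : ℝ => ‖A + s • B‖⁻¹ • (A + s • B) := by
      funext s; rw [hZtu]
    have hd : deriv (fun s : ℝ => ‖Z t s‖⁻¹ • Z t s) u
        = (-(⟪Zu, B⟫ / ‖Zu‖^3)) • Zu + ‖Zu‖⁻¹ • B := by
      rw [hfun]
      exact (key_deriv A B u hZune).deriv
    rw [hd]
    constructor
    · intro hV
      have h3 := congrArg (fun v : EuclideanSpace ℝ (Fin 3) => (‖Zu‖^3 : ℝ) • v) hV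
      simp only [smul_add, smul_smul, smul_zero] at h3
      have e1 : ‖Zu‖^3 * (-(⟪Zu, B⟫ / ‖Zu‖^3)) = -⟪Zu, B⟫ := by
        generalize ⟪Zu, B⟫ = c
        field_simp
        try ring
      have e2 : ‖Zu‖^3 * ‖Zu‖⁻¹ = ‖Zu‖^2 := by
        field_simp
      rw [e1, e2] at h3
      have hM : (‖Zu‖^2 : ℝ) • B = ⟪Zu, B⟫ • Zu := by
        have h8 := eq_neg_of_add_eq_zero_left h3
        rw [neg_smul] at h8
        exact (neg_inj.mp h8).symm
      have h4 := congrArg (fun v : EuclideanSpace ℝ (Fin 3) => cross3 Zu v) hM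
      simp only [cross3_smul_right] at h4
      rw [hZB, cross3_self, smul_zero, smul_smul] at h4
      have h5 : ‖Zu‖^2 * D = 0 := by
        rcases smul_eq_zero.mp h4 with h | h
        · exact h
        · exact absurd h hXne
      rcases mul_eq_zero.mp h5 with h | h
      · exact absurd h (by positivity)
      · exact h
    · intro hD0
      have hZB0 : cross3 Zu B = 0 := by rw [hZB, hD0, zero_smul]
      have hcc := cross3_cross3 Zu B
      rw [hZB0, cross3_zero_right, real_inner_self_eq_norm_sq] at hcc
      have hM : (‖Zu‖^2 : ℝ) • B = ⟪Zu, B⟫ • Zu := (sub_eq_zero.mp hcc.symm).symm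
      have hv : (‖Zu‖^2 : ℝ) • ((-(⟪Zu, B⟫ / ‖Zu‖^3)) • Zu + ‖Zu‖⁻¹ • B) = 0 := by
        rw [smul_add, smul_smul, smul_comm ((‖Zu‖ : ℝ)^2) (‖Zu‖⁻¹ : ℝ) B, hM, smul_smul,
          ← add_smul]
        have h9 : ‖Zu‖^2 * (-(⟪Zu, B⟫ / ‖Zu‖^3)) + ‖Zu‖⁻¹ * ⟪Zu, B⟫ = 0 := by
          generalize ⟪Zu, B⟫ = c
          field_simp
          try ring
        rw [h9, zero_smul]
      rcases smul_eq_zero.mp hv with h | h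
      · exact absurd h (by positivity)
      · exact h
  constructor
  · intro h t ht
    exact (key t ht 0 hJ0).mp (h t ht 0 hJ0)
  · intro h t ht u hu
    exact (key t ht u hu).mpr (h t ht)
end
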